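/- Let (X, θ) be an archimedean set: X a nonempty totally ordered set with an order automorphism θ satisfying θ(x) > x for all x and for all x,y there exists n ∈ ℕ with y ≤ θⁿ(x). Fix x₀ ∈ X. Then every element y ∈ X can be written uniquely as θᵏ(u) with k ∈ ℤ and u ∈ [x₀, θ(x₀)) = {u : x₀ ≤ u < θ(x₀)}. -/

import Mathlib

private lemma stmt17_powMono {X : Type*} [LinearOrder X] (σ : Equiv.Perm X)
    (h : StrictMono ⇑σ) (n : ℕ) : StrictMono ⇑(σ ^ n) := by
  induction n with
  | zero => simpa using strictMono_id
  | succ n ih =>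
    intro a b hab
    rw [pow_succ]
    simpa [Equiv.Perm.mul_apply] using ih (h hab)

/-- In an archimedean set `(X, θ)`, fixing `x₀ ∈ X`, every `y ∈ X` is uniquely
`θᵏ(u)` with `k ∈ ℤ` and `u ∈ [x₀, θ(x₀))`. -/
theorem stmt17 (X : Type*) [LinearOrder X] (θ : Equiv.Perm X)
    (hmono : ∀ a b : X, a ≤ b ↔ θ a ≤ θ b)
    (hgt : ∀ x : X, x < θ x)
    (harch : ∀ x y : X, ∃ n : ℕ, y ≤ (θ ^ n) x)
    (x₀ y : X) :
    ∃! p : ℤ × X, (θ ^ p.1) p.2 = y ∧ x₀ ≤ p.2 ∧ p.2 < θ x₀ := by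
  classical
  have hsm : StrictMono ⇑θ := by
    intro a b hab
    rcases lt_or_ge (θ a) (θ b) with h' | h'
    · exact h'
    · exact absurd ((hmono b a).mpr h') (not_le.mpr hab)
  have hinv : StrictMono ⇑θ⁻¹ := by
    intro a b hab
    rcases lt_or_ge (θ⁻¹ a) (θ⁻¹ b) with h' | h'
    · exact h'
    · have := hsm.monotone h'
      simp only [Equiv.Perm.inv_def, Equiv.apply_symm_apply] at this
      exact absurd this (not_le.mpr hab)
  have hsmz : ∀ k : ℤ, StrictMono ⇑(θ ^ k) := by
    intro k
    cases k with
    | ofNat n => simpa using stmt17_powMono θ hsm n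
    | negSucc n =>
      rw [zpow_negSucc, ← inv_pow]
      exact stmt17_powMono θ⁻¹ hinv (n + 1)
  have hpow : ∀ (n : ℕ) (x : X), x ≤ (θ ^ n) x := by
    intro n
    induction n with
    | zero => simp
    | succ n ih =>
      intro x
      calc x ≤ θ x := (hgt x).le
        _ ≤ (θ ^ n) (θ x) := ih (θ x)
        _ = (θ ^ (n + 1)) x := by rw [pow_succ]; simp [Equiv.Perm.mul_apply]
  -- strict monotonicity in the exponent
  have hz : ∀ k l : ℤ, k < l → ∀ x : X, (θ ^ k) x < (θ ^ l) x := by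
    intro k l hkl x
    have hstep : ∀ (m : ℕ) (z : X), z < (θ ^ ((m : ℤ) + 1)) z := by
      intro m z
      have : (θ ^ ((m : ℤ) + 1)) z = (θ ^ m) (θ z) := by
        rw [show ((m : ℤ) + 1) = ((m + 1 : ℕ) : ℤ) by push_cast; ring,
          zpow_natCast, pow_succ]
        simp [Equiv.Perm.mul_apply]
      rw [this]
      exact lt_of_lt_of_le (hgt z) (hpow m (θ z))
    obtain ⟨m, hm⟩ : ∃ m : ℕ, l - k = (m : ℤ) + 1 :=
      ⟨(l - k - 1).toNat, by omega⟩
    have key : (θ ^ k) x < (θ ^ (l - k)) ((θ ^ k) x) := by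
      rw [hm]; exact hstep m _
    have : (θ ^ (l - k)) ((θ ^ k) x) = (θ ^ l) x := by
      rw [← Equiv.Perm.mul_apply, ← zpow_add]
      congr 1; ring_nf
    rwa [this] at key
  have hle : ∀ k l : ℤ, k ≤ l → ∀ x : X, (θ ^ k) x ≤ (θ ^ l) x := by
    intro k l hkl x
    rcases hkl.lt_or_eq with h | h
    · exact (hz k l h x).le
    · rw [h]
  -- cancel lemma
  have hcancel : ∀ (a b : ℤ) (x : X), (θ ^ a) ((θ ^ b) x) = (θ ^ (a + b)) x := by
    intro a b x
    rw [← Equiv.Perm.mul_apply, ← zpow_add]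
  -- the set of exponents
  set P : ℤ → Prop := fun k => (θ ^ k) x₀ ≤ y with hP
  have Hinh : ∃ k, P k := by
    obtain ⟨n, hn⟩ := harch y x₀
    refine ⟨-(n : ℤ), ?_⟩
    have hn' : x₀ ≤ (θ ^ (n : ℤ)) y := by rwa [zpow_natCast]
    have := (hsmz (-(n : ℤ))).monotone hn'
    rwa [hcancel, neg_add_cancel, zpow_zero, Equiv.Perm.one_apply] at this
  have Hbd : ∃ b : ℤ, ∀ k, P k → k ≤ b := by
    obtain ⟨n, hn⟩ := harch x₀ y
    refine ⟨(n : ℤ), fun k hk => ?_⟩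
    by_contra h
    have hlt : ((n : ℤ)) < k := by omega
    have := hz _ _ hlt x₀
    rw [zpow_natCast] at this
    exact absurd (hk.trans hn) (not_le.mpr this)
  obtain ⟨k, hk, hkmax⟩ := Int.exists_greatest_of_bdd Hbd Hinh
  have hky : y < (θ ^ (k + 1)) x₀ := by
    by_contra h
    have : P (k + 1) := not_lt.mp h
    have := hkmax _ this
    omega
  set u : X := (θ ^ (-k)) y with hu
  have hku : (θ ^ k) u = y := by
    rw [hu, hcancel, add_neg_cancel, zpow_zero, Equiv.Perm.one_apply]
  have hx₀u : x₀ ≤ u := by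
    have := (hsmz (-k)).monotone hk
    rwa [hcancel, neg_add_cancel, zpow_zero, Equiv.Perm.one_apply] at this
  have huθ : u < θ x₀ := by
    have := hsmz (-k) hky
    rw [hcancel] at this
    have h1 : (-k + (k + 1)) = (1 : ℤ) := by ring
    rwa [h1, zpow_one] at this
  refine ⟨(k, u), ⟨hku, hx₀u, huθ⟩, ?_⟩
  rintro ⟨j, v⟩ ⟨hjv, hx₀v, hvθ⟩
  have hjk : j = k := by
    by_contra h
    rcases lt_or_gt_of_ne h with hlt | hgt'
    · -- j < k : y = θ^j v < θ^j (θ x₀) = θ^(j+1) x₀ ≤ θ^k x₀ ≤ y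
      have h1 : y < (θ ^ (j + 1)) x₀ := by
        have := hsmz j hvθ
        rw [hjv] at this
        have h2 : (θ ^ j) (θ x₀) = (θ ^ (j + 1)) x₀ := by
          rw [show θ x₀ = (θ ^ (1 : ℤ)) x₀ by rw [zpow_one], hcancel]
        rwa [h2] at this
      have h2 : (θ ^ (j + 1)) x₀ ≤ (θ ^ k) x₀ := hle _ _ (by omega) x₀
      exact absurd (h1.trans_le (h2.trans hk)) (lt_irrefl y)
    · -- k < j : y = θ^j v ≥ θ^j x₀ ≥ θ^(k+1) x₀ > y
      have h1 : (θ ^ j) x₀ ≤ y := by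
        have := (hsmz j).monotone hx₀v
        rwa [hjv] at this
      have h2 : (θ ^ (k + 1)) x₀ ≤ (θ ^ j) x₀ := hle _ _ (by omega) x₀
      exact absurd ((h2.trans h1).trans_lt hky) (lt_irrefl _)
  subst hjk
  have hv : v = u := by
    have : (θ ^ j) v = (θ ^ j) u := by rw [hjv, hku]
    exact (hsmz j).injective this
  simp [hv]
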